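/- arXiv:0804.3549 — 7 statements merged into one kernel-verified Lean document; each statement's English description precedes it below -/
import Mathlib

section
/- Let s ≥ 0 and β ≥ 0. There is a constant C(s) such that for all integers a, b, k with a + b + k = 0 and |a| ≤ |b| ≤ |k|, one has |k·|k|^{2s} + a·|a|^{2s} + b·|b|^{2s}| ≤ C(s)·|a|·|k|^{2s}, and consequently this is bounded by C(s)·|a|^{1-2β}·|b|^{s+β}·|k|^{s+β}. -/
open Real

private lemma keyPos (s x y : ℝ) (hs : 0 ≤ s) (hy : 0 ≤ y) (hxy : y ≤ x) :
    x * x ^ (2 * s) - y * y ^ (2 * s) ≤ (2 * s + 2) * ((x - y) * x ^ (2 * s)) := by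
  rcases eq_or_lt_of_le (hy.trans hxy) with h0 | hx
  · have hy0 : y = 0 := le_antisymm (hxy.trans_eq h0.symm) hy
    simp [← h0, hy0]
  -- x > 0
  have hxne : x ≠ 0 := ne_of_gt hx
  have hp : (1 : ℝ) ≤ 2 * s + 1 := by linarith
  have hber : 1 + (2 * s + 1) * (y / x - 1) ≤ (1 + (y / x - 1)) ^ (2 * s + 1) :=
    one_add_mul_self_le_rpow_one_add (by have : 0 ≤ y / x := div_nonneg hy hx.le; linarith) hp
  rw [add_sub_cancel] at hber
  have hdiv : (y / x) ^ (2 * s + 1) = y ^ (2 * s + 1) / x ^ (2 * s + 1) :=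
    Real.div_rpow hy hx.le _
  have hxp : x ^ (2 * s + 1) = x ^ (2 * s) * x := Real.rpow_add_one hxne (2 * s)
  have hyp : y ^ (2 * s + 1) = y ^ (2 * s) * y := by
    rcases eq_or_lt_of_le hy with h | h
    · rw [← h, Real.zero_rpow (by linarith : (0:ℝ) < 2*s+1).ne', mul_zero]
    · exact Real.rpow_add_one (ne_of_gt h) (2 * s)
  have hmul := mul_le_mul_of_nonneg_right hber (le_of_lt (Real.rpow_pos_of_pos hx (2 * s + 1)))
  rw [hdiv, div_mul_cancel₀ _ (ne_of_gt (Real.rpow_pos_of_pos hx (2 * s + 1)))] at hmul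
  have hyx : y / x * x = y := div_mul_cancel₀ y hxne
  have expand : (1 + (2 * s + 1) * (y / x - 1)) * x ^ (2 * s + 1)
      = x ^ (2 * s) * x + (2 * s + 1) * (y - x) * x ^ (2 * s) := by
    rw [hxp]; field_simp
  rw [expand] at hmul
  rw [hxp, hyp] at *
  nlinarith [Real.rpow_nonneg hx.le (2 * s), Real.rpow_nonneg hy (2 * s)]

private lemma keyNN (s x y : ℝ) (hs : 0 ≤ s) (hx : 0 ≤ x) (h : |y| ≤ |x|) :
    |x * |x| ^ (2 * s) - y * |y| ^ (2 * s)| ≤ (2 * s + 2) * (|x - y| * |x| ^ (2 * s)) := by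
  rw [abs_of_nonneg hx] at *
  rcases le_or_gt 0 y with hy | hy
  · rw [abs_of_nonneg hy] at *
    have hxy : y ≤ x := h
    have hmono : y * y ^ (2 * s) ≤ x * x ^ (2 * s) :=
      mul_le_mul hxy (Real.rpow_le_rpow hy h (by positivity)) (by positivity) hx
    rw [abs_of_nonneg (by linarith), abs_of_nonneg (by linarith)]
    exact keyPos s x y hs hy hxy
  · rw [abs_of_neg hy] at *
    have h1 : (-y) ^ (2 * s) ≤ x ^ (2 * s) := Real.rpow_le_rpow (by linarith) h (by positivity)
    have hny : (0:ℝ) ≤ -y := by linarith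
    have h2 : y * (-y) ^ (2 * s) ≤ 0 :=
      mul_nonpos_of_nonpos_of_nonneg hy.le (Real.rpow_nonneg hny _)
    have h3 : 0 ≤ x * x ^ (2 * s) := mul_nonneg hx (Real.rpow_nonneg hx _)
    have e1 : (-y) * (-y) ^ (2 * s) ≤ (-y) * x ^ (2 * s) :=
      mul_le_mul_of_nonneg_left h1 hny
    have e3 : 0 ≤ (x - y) * x ^ (2 * s) :=
      mul_nonneg (by linarith) (Real.rpow_nonneg hx _)
    rw [abs_of_nonneg (by linarith), abs_of_nonneg (by linarith)]
    nlinarith [Real.rpow_nonneg hx (2 * s)]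

private lemma key (s x y : ℝ) (hs : 0 ≤ s) (h : |y| ≤ |x|) :
    |x * |x| ^ (2 * s) - y * |y| ^ (2 * s)| ≤ (2 * s + 2) * (|x - y| * |x| ^ (2 * s)) := by
  rcases le_or_gt 0 x with hx | hx
  · exact keyNN s x y hs hx h
  · have := keyNN s (-x) (-y) hs (by linarith) (by rwa [abs_neg, abs_neg])
    rw [abs_neg, abs_neg] at this
    calc |x * |x| ^ (2 * s) - y * |y| ^ (2 * s)|
        = |(-x) * |x| ^ (2 * s) - (-y) * |y| ^ (2 * s)| := by
          rw [show (-x) * |x| ^ (2*s) - (-y) * |y| ^ (2*s)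
              = -(x * |x| ^ (2*s) - y * |y| ^ (2*s)) by ring, abs_neg]
      _ ≤ (2 * s + 2) * (|-x - -y| * |x| ^ (2 * s)) := this
      _ = (2 * s + 2) * (|x - y| * |x| ^ (2 * s)) := by
          rw [show -x - -y = -(x - y) by ring, abs_neg]

/-- For `s ≥ 0`, `β ≥ 0` there is a constant `C` such that for all integers
`a, b, k` with `a + b + k = 0` and `|a| ≤ |b| ≤ |k|`,
`|k·|k|^{2s} + a·|a|^{2s} + b·|b|^{2s}| ≤ C·|a|·|k|^{2s}`, and consequently it is
also bounded by `C·|a|^{1-2β}·|b|^{s+β}·|k|^{s+β}`. -/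
theorem stmt_1 (s β : ℝ) (hs : 0 ≤ s) (hβ : 0 ≤ β) :
    ∃ C > 0, ∀ a b k : ℤ, a + b + k = 0 → |a| ≤ |b| → |b| ≤ |k| →
      |(k : ℝ) * |(k : ℝ)| ^ (2 * s) + (a : ℝ) * |(a : ℝ)| ^ (2 * s)
          + (b : ℝ) * |(b : ℝ)| ^ (2 * s)| ≤ C * |(a : ℝ)| * |(k : ℝ)| ^ (2 * s) ∧
      |(k : ℝ) * |(k : ℝ)| ^ (2 * s) + (a : ℝ) * |(a : ℝ)| ^ (2 * s)
          + (b : ℝ) * |(b : ℝ)| ^ (2 * s)| ≤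
        C * |(a : ℝ)| ^ (1 - 2 * β) * |(b : ℝ)| ^ (s + β) * |(k : ℝ)| ^ (s + β) := by
  refine ⟨(2:ℝ) ^ s * (2 * s + 3), by positivity, ?_⟩
  intro a b k habk h1 h2
  set A := (a : ℝ); set B := (b : ℝ); set K := (k : ℝ)
  have hA : |A| ≤ |B| := by
    simp only [A, B, ← Int.cast_abs]; exact_mod_cast h1
  have hB : |B| ≤ |K| := by
    simp only [B, K, ← Int.cast_abs]; exact_mod_cast h2
  have hBe : B = -(A + K) := by
    have : (a : ℝ) + b + k = 0 := by exact_mod_cast congrArg (Int.cast : ℤ → ℝ) habk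
    linarith
  have htwos : (1:ℝ) ≤ (2:ℝ) ^ s := Real.one_le_rpow one_le_two hs
  have hak : |A + K| = |B| := by rw [hBe, abs_neg]
  -- main estimate
  have hkey : |K * |K| ^ (2 * s) - (A + K) * |A + K| ^ (2 * s)|
      ≤ (2 * s + 2) * (|A| * |K| ^ (2 * s)) := by
    have := key s K (A + K) hs (by rw [hak]; exact hB)
    have habs : |K - (A + K)| = |A| := by rw [show K - (A + K) = -A by ring, abs_neg]
    rwa [habs] at this
  have hAK : |A| ≤ |K| := hA.trans hB
  have hfa : |A * |A| ^ (2 * s)| ≤ |A| * |K| ^ (2 * s) := by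
    rw [abs_mul, abs_of_nonneg (Real.rpow_nonneg (abs_nonneg A) _)]
    exact mul_le_mul_of_nonneg_left
      (Real.rpow_le_rpow (abs_nonneg A) hAK (by positivity)) (abs_nonneg A)
  have hE : |K * |K| ^ (2 * s) + A * |A| ^ (2 * s) + B * |B| ^ (2 * s)|
      ≤ (2 * s + 3) * (|A| * |K| ^ (2 * s)) := by
    have hBrw : B * |B| ^ (2 * s) = -((A + K) * |A + K| ^ (2 * s)) := by
      rw [hBe, abs_neg, neg_mul]
    calc |K * |K| ^ (2 * s) + A * |A| ^ (2 * s) + B * |B| ^ (2 * s)|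
        = |(K * |K| ^ (2 * s) - (A + K) * |A + K| ^ (2 * s)) + A * |A| ^ (2 * s)| := by
          rw [hBrw]; ring_nf
      _ ≤ |K * |K| ^ (2 * s) - (A + K) * |A + K| ^ (2 * s)| + |A * |A| ^ (2 * s)| :=
          abs_add_le _ _
      _ ≤ (2 * s + 2) * (|A| * |K| ^ (2 * s)) + |A| * |K| ^ (2 * s) := by
          exact add_le_add hkey hfa
      _ = (2 * s + 3) * (|A| * |K| ^ (2 * s)) := by ring
  constructor
  · calc |K * |K| ^ (2 * s) + A * |A| ^ (2 * s) + B * |B| ^ (2 * s)|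
        ≤ (2 * s + 3) * (|A| * |K| ^ (2 * s)) := hE
      _ = 1 * ((2 * s + 3) * (|A| * |K| ^ (2 * s))) := by ring
      _ ≤ (2:ℝ) ^ s * ((2 * s + 3) * (|A| * |K| ^ (2 * s))) := by
          refine mul_le_mul_of_nonneg_right htwos ?_
          have := Real.rpow_nonneg (abs_nonneg K) (2 * s)
          have := abs_nonneg A
          positivity
      _ = (2:ℝ) ^ s * (2 * s + 3) * |A| * |K| ^ (2 * s) := by ring
  · rcases eq_or_ne a 0 with rfl | ha
    · have hA0 : A = 0 := by simp [A]
      have hBK : B = -K := by rw [hBe, hA0, zero_add]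
      have : K * |K| ^ (2 * s) + A * |A| ^ (2 * s) + B * |B| ^ (2 * s) = 0 := by
        rw [hA0, hBK, abs_neg]; ring
      rw [this, abs_zero]
      have h1 : (0:ℝ) ≤ |A| ^ (1 - 2 * β) := Real.rpow_nonneg (abs_nonneg A) _
      positivity
    · -- a ≠ 0, so 1 ≤ |A|
      have hA1 : (1:ℝ) ≤ |A| := by
        have : (1:ℤ) ≤ |a| := Int.one_le_abs (by exact_mod_cast ha)
        calc (1:ℝ) = ((1:ℤ):ℝ) := by norm_num
          _ ≤ ((|a|:ℤ):ℝ) := by exact_mod_cast this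
          _ = |A| := by rw [Int.cast_abs]
      have hApos : (0:ℝ) < |A| := lt_of_lt_of_le one_pos hA1
      have hBpos : (0:ℝ) < |B| := lt_of_lt_of_le hApos hA
      have hKpos : (0:ℝ) < |K| := lt_of_lt_of_le hBpos hB
      have hK2B : |K| ≤ 2 * |B| := by
        have : K = -(A + B) := by rw [hBe]; ring
        calc |K| = |A + B| := by rw [this, abs_neg]
          _ ≤ |A| + |B| := abs_add_le _ _
          _ ≤ 2 * |B| := by linarith
      -- |A| = |A|^{1-2β} * |A|^{2β}
      have hAsplit : |A| = |A| ^ (1 - 2 * β) * |A| ^ (2 * β) := by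
        rw [← Real.rpow_add hApos, sub_add_cancel, Real.rpow_one]
      have hA2β : |A| ^ (2 * β) ≤ |B| ^ β * |K| ^ β := by
        rw [show 2 * β = β + β by ring, Real.rpow_add hApos]
        exact mul_le_mul (Real.rpow_le_rpow hApos.le hA hβ)
          (Real.rpow_le_rpow hApos.le hAK hβ) (by positivity) (by positivity)
      have hKs : |K| ^ s ≤ (2:ℝ) ^ s * |B| ^ s := by
        calc |K| ^ s ≤ (2 * |B|) ^ s := Real.rpow_le_rpow hKpos.le hK2B hs
          _ = (2:ℝ) ^ s * |B| ^ s := Real.mul_rpow (by norm_num) hBpos.le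
      have hK2s : |K| ^ (2 * s) = |K| ^ s * |K| ^ s := by
        rw [← Real.rpow_add hKpos]; ring_nf
      have hchain : |A| * |K| ^ (2 * s)
          ≤ (2:ℝ) ^ s * (|A| ^ (1 - 2 * β) * |B| ^ (s + β) * |K| ^ (s + β)) := by
        have hBsum : |B| ^ β * |B| ^ s = |B| ^ (s + β) := by
          rw [← Real.rpow_add hBpos]; ring_nf
        have hKsum : |K| ^ β * |K| ^ s = |K| ^ (s + β) := by
          rw [← Real.rpow_add hKpos]; ring_nf
        calc |A| * |K| ^ (2 * s)
            = (|A| ^ (1 - 2 * β) * |A| ^ (2 * β)) * (|K| ^ s * |K| ^ s) := by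
              rw [← hAsplit, ← hK2s]
          _ ≤ (|A| ^ (1 - 2 * β) * (|B| ^ β * |K| ^ β)) * (((2:ℝ) ^ s * |B| ^ s) * |K| ^ s) := by
              apply mul_le_mul
              · exact mul_le_mul_of_nonneg_left hA2β (Real.rpow_nonneg hApos.le _)
              · exact mul_le_mul_of_nonneg_right hKs (Real.rpow_nonneg hKpos.le s)
              · positivity
              · positivity
          _ = (2:ℝ) ^ s * (|A| ^ (1 - 2 * β) * (|B| ^ β * |B| ^ s) * (|K| ^ β * |K| ^ s)) := by
              ring
          _ = (2:ℝ) ^ s * (|A| ^ (1 - 2 * β) * |B| ^ (s + β) * |K| ^ (s + β)) := by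
              rw [hBsum, hKsum]
      calc |K * |K| ^ (2 * s) + A * |A| ^ (2 * s) + B * |B| ^ (2 * s)|
          ≤ (2 * s + 3) * (|A| * |K| ^ (2 * s)) := hE
        _ ≤ (2 * s + 3) * ((2:ℝ) ^ s * (|A| ^ (1 - 2 * β) * |B| ^ (s + β) * |K| ^ (s + β))) :=
            mul_le_mul_of_nonneg_left hchain (by linarith)
        _ = (2:ℝ) ^ s * (2 * s + 3) * |A| ^ (1 - 2 * β) * |B| ^ (s + β) * |K| ^ (s + β) := by
            ring
end

section
/- Let ω : [0,∞) → [0,∞) be a modulus of continuity (increasing, continuous, concave, ω(0)=0) that is differentiable at 0 with ω'(0) < ∞ and satisfies ω''(0) = -∞ in the sense that ω(ξ) = ω'(0)ξ - ρ(ξ)ξ² with ρ(ξ) → +∞ as ξ → 0+. If f : ℝ → ℝ is a C² periodic function having modulus of continuity ω (i.e., |f(x)-f(y)| ≤ ω(|x-y|) for all x, y), then sup |f'| < ω'(0). -/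
/-- If a modulus of continuity `ω` (increasing, continuous, concave, `ω 0 = 0`) has
finite derivative `D` at `0` and `ω''(0) = -∞` in the sense `ω ξ = D ξ - ρ(ξ) ξ²` with
`ρ(ξ) → +∞` as `ξ → 0⁺`, then any `C²` periodic function `f` with modulus of continuity
`ω` satisfies `sup |f'| < D`. -/
theorem stmt_2 (ω ρ : ℝ → ℝ) (D : ℝ)
    (hω0 : ω 0 = 0)
    (hmono : MonotoneOn ω (Set.Ici 0))
    (hcont : ContinuousOn ω (Set.Ici 0))
    (hconc : ConcaveOn ℝ (Set.Ici 0) ω)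
    (hderiv : HasDerivWithinAt ω D (Set.Ici 0) 0)
    (hrep : ∀ ξ : ℝ, 0 < ξ → ω ξ = D * ξ - ρ ξ * ξ ^ 2)
    (hρ : Filter.Tendsto ρ (nhdsWithin 0 (Set.Ioi 0)) Filter.atTop)
    (f : ℝ → ℝ) (L : ℝ) (hL : 0 < L)
    (hper : Function.Periodic f L)
    (hf : ContDiff ℝ 2 f)
    (hmod : ∀ x y : ℝ, |f x - f y| ≤ ω |x - y|) :
    ∃ M < D, ∀ x : ℝ, |deriv f x| ≤ M := by
  -- f' is C¹
  have hf1 : ContDiff ℝ 1 (deriv f) := by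
    have h2 : ContDiff ℝ (1 + 1 : ℕ) f := by exact_mod_cast hf
    exact (contDiff_succ_iff_deriv.mp (by exact_mod_cast h2)).2.2
  have hdiff : Differentiable ℝ f := hf.differentiable (by norm_num)
  have hdiff1 : Differentiable ℝ (deriv f) := hf1.differentiable (by norm_num)
  -- deriv f and deriv (deriv f) are periodic
  have hperd : ∀ g : ℝ → ℝ, Function.Periodic g L → Function.Periodic (deriv g) L := by
    intro g hg x
    have h1 : (fun y => g (y + L)) = g := funext hg
    calc deriv g (x + L) = deriv (fun y => g (y + L)) x := (deriv_comp_add_const g L x).symm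
      _ = deriv g x := by rw [h1]
  have hper2 : Function.Periodic (deriv (deriv f)) L := hperd _ (hperd _ hper)
  have hcont2 : Continuous (deriv (deriv f)) := hf1.continuous_deriv le_rfl
  -- global bound on the second derivative
  obtain ⟨K, hK⟩ := isBounded_iff_forall_norm_le.mp
    (hper2.isBounded_of_continuous (ne_of_gt hL) hcont2)
  have hKb : ∀ x : ℝ, |deriv (deriv f) x| ≤ K := fun x => hK _ ⟨x, rfl⟩
  -- f' is K-Lipschitz
  have hlip : ∀ a b : ℝ, |deriv f b - deriv f a| ≤ K * |b - a| := by
    intro a b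
    exact convex_univ.norm_image_sub_le_of_norm_deriv_le (fun y _ => hdiff1 y)
      (fun y _ => hKb y) (Set.mem_univ a) (Set.mem_univ b)
  -- key estimate: for any ξ > 0 and any x, |f'(x)| * ξ ≤ K ξ² + D ξ - ρ ξ * ξ²
  have key : ∀ x ξ : ℝ, 0 < ξ → |deriv f x| * ξ ≤ K * ξ ^ 2 + (D * ξ - ρ ξ * ξ ^ 2) := by
    intro x ξ hξ
    obtain ⟨c, hc, hslope⟩ := exists_deriv_eq_slope f (by linarith : x < x + ξ)
      (hdiff.continuous.continuousOn) (hdiff.differentiableOn)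
    have hcξ : deriv f c * ξ = f (x + ξ) - f x := by
      rw [hslope, add_sub_cancel_left]; field_simp
    have h1 : |deriv f x - deriv f c| ≤ K * ξ := by
      calc |deriv f x - deriv f c| = |deriv f c - deriv f x| := abs_sub_comm _ _
        _ ≤ K * |c - x| := hlip x c
        _ ≤ K * ξ := by
            have hK0 : 0 ≤ K := le_trans (abs_nonneg _) (hKb 0)
            have : |c - x| ≤ ξ := by
              rw [abs_of_pos (by linarith [hc.1])]
              linarith [hc.2]
            nlinarith
    have h2 : |f (x + ξ) - f x| ≤ D * ξ - ρ ξ * ξ ^ 2 := by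
      have := hmod (x + ξ) x
      rw [show x + ξ - x = ξ by ring, abs_of_pos hξ, hrep ξ hξ] at this
      exact this
    calc |deriv f x| * ξ = |deriv f x * ξ| := by
          rw [abs_mul, abs_of_pos hξ]
      _ = |(deriv f x - deriv f c) * ξ + (f (x + ξ) - f x)| := by rw [← hcξ]; ring_nf
      _ ≤ |(deriv f x - deriv f c) * ξ| + |f (x + ξ) - f x| := abs_add_le _ _
      _ ≤ K * ξ * ξ + (D * ξ - ρ ξ * ξ ^ 2) := by
          rw [abs_mul, abs_of_pos hξ]
          exact add_le_add (mul_le_mul_of_nonneg_right h1 hξ.le) h2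
      _ = K * ξ ^ 2 + (D * ξ - ρ ξ * ξ ^ 2) := by ring
  -- pick ξ₀ with ρ ξ₀ ≥ K + 1
  obtain ⟨ξ₀, hρξ, hξ₀⟩ := ((hρ.eventually_ge_atTop (K + 1)).and
    self_mem_nhdsWithin).exists
  have hξ₀pos : (0 : ℝ) < ξ₀ := hξ₀
  refine ⟨D - ξ₀, by linarith, fun x => ?_⟩
  have h := key x ξ₀ hξ₀pos
  have : |deriv f x| * ξ₀ ≤ (D - ξ₀) * ξ₀ := by nlinarith
  exact le_of_mul_le_mul_right (by linarith [this]) hξ₀pos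
end

section
/- Define for K > 0 and 0 ≤ ξ ≤ ξ₀ := (K/(4π))² the function ω(ξ) = ξ/(1 + K√ξ). Then on (0, ξ₀], ω is concave, its second derivative ω''(ξ) = -K(3ξ^{-1/2} + K)/(4(1+K√ξ)³) is negative and increasing, and for all 0 < ξ ≤ ξ₀ one has 2ω(ξ)ω'(ξ) + (1/π)ξω''(ξ) ≤ 0, i.e., ξ^{1/2}(2ξ^{1/2} + Kξ)/(1+Kξ^{1/2})³ ≤ K(3ξ^{1/2} + Kξ)/(4π(1+Kξ^{1/2})³). -/
open Real Set Filter

namespace Stmt5Aux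

lemma hd1 {K : ℝ} (hK : 0 < K) {ξ : ℝ} (hξ : 0 < ξ) :
    HasDerivAt (fun ξ => ξ / (1 + K * Real.sqrt ξ))
      ((2 + K * Real.sqrt ξ) / (2 * (1 + K * Real.sqrt ξ) ^ 2)) ξ := by
  have hs0 : 0 < Real.sqrt ξ := Real.sqrt_pos.mpr hξ
  have hden : 0 < 1 + K * Real.sqrt ξ := by positivity
  have hsq : HasDerivAt Real.sqrt (1 / (2 * Real.sqrt ξ)) ξ := Real.hasDerivAt_sqrt hξ.ne'
  have hden' : HasDerivAt (fun ξ : ℝ => 1 + K * Real.sqrt ξ) (K * (1 / (2 * Real.sqrt ξ))) ξ :=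
    (hsq.const_mul K).const_add 1
  have h := (hasDerivAt_id ξ).div hden' hden.ne'
  refine h.congr_deriv ?_
  have h2 : Real.sqrt ξ * Real.sqrt ξ = ξ := Real.mul_self_sqrt hξ.le
  simp only [id_eq]
  set s := Real.sqrt ξ with hs
  rw [← h2]
  field_simp
  ring

lemma hd2 {K : ℝ} (hK : 0 < K) {ξ : ℝ} (hξ : 0 < ξ) :
    HasDerivAt (fun ξ => (2 + K * Real.sqrt ξ) / (2 * (1 + K * Real.sqrt ξ) ^ 2))
      (-(K * (3 / Real.sqrt ξ + K)) / (4 * (1 + K * Real.sqrt ξ) ^ 3)) ξ := by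
  have hs0 : 0 < Real.sqrt ξ := Real.sqrt_pos.mpr hξ
  have hden : 0 < 1 + K * Real.sqrt ξ := by positivity
  have hsq : HasDerivAt Real.sqrt (1 / (2 * Real.sqrt ξ)) ξ := Real.hasDerivAt_sqrt hξ.ne'
  have hd : HasDerivAt (fun ξ : ℝ => 1 + K * Real.sqrt ξ) (K * (1 / (2 * Real.sqrt ξ))) ξ :=
    (hsq.const_mul K).const_add 1
  have hnum : HasDerivAt (fun ξ : ℝ => 2 + K * Real.sqrt ξ) (K * (1 / (2 * Real.sqrt ξ))) ξ :=
    (hsq.const_mul K).const_add 2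
  have hdd : HasDerivAt (fun ξ : ℝ => 2 * (1 + K * Real.sqrt ξ) ^ 2)
      (2 * (2 * (1 + K * Real.sqrt ξ) ^ 1 * (K * (1 / (2 * Real.sqrt ξ))))) ξ :=
    (hd.pow 2).const_mul 2
  have hden2 : (2 : ℝ) * (1 + K * Real.sqrt ξ) ^ 2 ≠ 0 := by positivity
  have h := hnum.div hdd hden2
  refine h.congr_deriv ?_
  have h2 : Real.sqrt ξ * Real.sqrt ξ = ξ := Real.mul_self_sqrt hξ.le
  set s := Real.sqrt ξ with hs
  field_simp
  ring

lemma deriv1 {K : ℝ} (hK : 0 < K) {ξ : ℝ} (hξ : 0 < ξ) :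
    deriv (fun ξ => ξ / (1 + K * Real.sqrt ξ)) ξ
      = (2 + K * Real.sqrt ξ) / (2 * (1 + K * Real.sqrt ξ) ^ 2) :=
  (hd1 hK hξ).deriv

lemma deriv2 {K : ℝ} (hK : 0 < K) {ξ : ℝ} (hξ : 0 < ξ) :
    deriv (deriv (fun ξ => ξ / (1 + K * Real.sqrt ξ))) ξ
      = -(K * (3 / Real.sqrt ξ + K)) / (4 * (1 + K * Real.sqrt ξ) ^ 3) := by
  have hev : deriv (fun ξ => ξ / (1 + K * Real.sqrt ξ))
      =ᶠ[nhds ξ] fun ξ => (2 + K * Real.sqrt ξ) / (2 * (1 + K * Real.sqrt ξ) ^ 2) := by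
    filter_upwards [Ioi_mem_nhds hξ] with y hy using deriv1 hK hy
  rw [hev.deriv_eq]
  exact (hd2 hK hξ).deriv

end Stmt5Aux

open Stmt5Aux Real Set Filter


/-- Properties of the inner piece `ω(ξ) = ξ/(1+K√ξ)` of the modulus of continuity on
`(0, ξ₀]`, `ξ₀ = (K/(4π))²`: concavity, the formula for `ω''`, its negativity and
monotonicity, and the key inequality `2ω(ξ)ω'(ξ) + (1/π)ξω''(ξ) ≤ 0`. -/
theorem stmt_5 (K : ℝ) (hK : 0 < K) :
    ConcaveOn ℝ (Set.Ioc 0 ((K / (4 * Real.pi)) ^ 2))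
      (fun ξ => ξ / (1 + K * Real.sqrt ξ)) ∧
    (∀ ξ ∈ Set.Ioc (0 : ℝ) ((K / (4 * Real.pi)) ^ 2),
      deriv (deriv (fun ξ => ξ / (1 + K * Real.sqrt ξ))) ξ
          = -(K * (3 / Real.sqrt ξ + K)) / (4 * (1 + K * Real.sqrt ξ) ^ 3) ∧
      deriv (deriv (fun ξ => ξ / (1 + K * Real.sqrt ξ))) ξ < 0) ∧
    MonotoneOn (deriv (deriv (fun ξ => ξ / (1 + K * Real.sqrt ξ))))
      (Set.Ioc 0 ((K / (4 * Real.pi)) ^ 2)) ∧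
    ∀ ξ ∈ Set.Ioc (0 : ℝ) ((K / (4 * Real.pi)) ^ 2),
      2 * (ξ / (1 + K * Real.sqrt ξ)) * deriv (fun ξ => ξ / (1 + K * Real.sqrt ξ)) ξ
          + (1 / Real.pi) * ξ * deriv (deriv (fun ξ => ξ / (1 + K * Real.sqrt ξ))) ξ ≤ 0 ∧
      Real.sqrt ξ * (2 * Real.sqrt ξ + K * ξ) / (1 + K * Real.sqrt ξ) ^ 3
          ≤ K * (3 * Real.sqrt ξ + K * ξ) / (4 * Real.pi * (1 + K * Real.sqrt ξ) ^ 3) := by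
  have hπ : 0 < Real.pi := Real.pi_pos
  have hξ0 : 0 < (K / (4 * Real.pi)) ^ 2 := by positivity
  set ξ₀ := (K / (4 * Real.pi)) ^ 2 with hξ0def
  have hneg : ∀ ξ : ℝ, 0 < ξ →
      deriv (deriv (fun ξ => ξ / (1 + K * Real.sqrt ξ))) ξ < 0 := by
    intro ξ hξ
    have hs0 : 0 < Real.sqrt ξ := Real.sqrt_pos.mpr hξ
    rw [deriv2 hK hξ]
    apply div_neg_of_neg_of_pos
    · have : 0 < K * (3 / Real.sqrt ξ + K) := by positivity
      linarith
    · positivity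
  refine ⟨?_, ?_, ?_, ?_⟩
  · -- concavity
    apply concaveOn_of_deriv2_nonpos (convex_Ioc _ _)
    · apply ContinuousOn.div continuousOn_id
        ((continuous_const.add (continuous_const.mul Real.continuous_sqrt)).continuousOn)
      intro x hx
      have : 0 ≤ Real.sqrt x := Real.sqrt_nonneg x
      show 1 + K * Real.sqrt x ≠ 0
      positivity
    · rw [interior_Ioc]
      intro x hx
      exact (hd1 hK hx.1).differentiableAt.differentiableWithinAt
    · rw [interior_Ioc]
      intro x hx
      have hev : (fun ξ => (2 + K * Real.sqrt ξ) / (2 * (1 + K * Real.sqrt ξ) ^ 2))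
          =ᶠ[nhds x] deriv (fun ξ => ξ / (1 + K * Real.sqrt ξ)) := by
        filter_upwards [Ioi_mem_nhds hx.1] with y hy using (deriv1 hK hy).symm
      exact (((hd2 hK hx.1).congr_of_eventuallyEq hev.symm).differentiableAt).differentiableWithinAt
    · rw [interior_Ioc]
      intro x hx
      have : deriv^[2] (fun ξ => ξ / (1 + K * Real.sqrt ξ)) x
          = deriv (deriv (fun ξ => ξ / (1 + K * Real.sqrt ξ))) x := rfl
      rw [this]
      exact (hneg x hx.1).le
  · intro ξ hξ
    exact ⟨deriv2 hK hξ.1, hneg ξ hξ.1⟩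
  · -- monotonicity of ω''
    intro x hx y hy hxy
    have hsx : 0 < Real.sqrt x := Real.sqrt_pos.mpr hx.1
    have hsy : 0 < Real.sqrt y := Real.sqrt_pos.mpr hy.1
    have hs : Real.sqrt x ≤ Real.sqrt y := Real.sqrt_le_sqrt hxy
    rw [deriv2 hK hx.1, deriv2 hK hy.1, neg_div, neg_div, neg_le_neg_iff]
    apply div_le_div₀ (by positivity) ?_ (by positivity) ?_
    · gcongr
    · gcongr
  · -- key inequality
    intro ξ hξ
    obtain ⟨hξp, hξle⟩ := hξ
    have hs0 : 0 < Real.sqrt ξ := Real.sqrt_pos.mpr hξp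
    have hden : 0 < 1 + K * Real.sqrt ξ := by positivity
    have h2 : Real.sqrt ξ * Real.sqrt ξ = ξ := Real.mul_self_sqrt hξp.le
    have hsle : Real.sqrt ξ ≤ K / (4 * Real.pi) := by
      have := Real.sqrt_le_sqrt hξle
      rwa [Real.sqrt_sq (by positivity)] at this
    have hKs : 4 * Real.pi * Real.sqrt ξ ≤ K := by
      rw [le_div_iff₀ (by positivity)] at hsle
      linarith [hsle]
    have key : Real.sqrt ξ * (2 * Real.sqrt ξ + K * ξ) / (1 + K * Real.sqrt ξ) ^ 3
        ≤ K * (3 * Real.sqrt ξ + K * ξ) / (4 * Real.pi * (1 + K * Real.sqrt ξ) ^ 3) := by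
      rw [div_le_div_iff₀ (by positivity) (by positivity)]
      have h1 : 4 * Real.pi * Real.sqrt ξ * (2 * Real.sqrt ξ + K * ξ)
          ≤ K * (3 * Real.sqrt ξ + K * ξ) := by
        nlinarith [mul_le_mul_of_nonneg_right hKs (by positivity : (0:ℝ) ≤ 2 * Real.sqrt ξ + K * ξ),
          mul_pos hK hs0]
      nlinarith [mul_le_mul_of_nonneg_right h1 (by positivity : (0:ℝ) ≤ (1 + K * Real.sqrt ξ) ^ 3)]
    refine ⟨?_, key⟩
    rw [deriv1 hK hξp, deriv2 hK hξp]
    have heq : 2 * (ξ / (1 + K * Real.sqrt ξ))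
          * ((2 + K * Real.sqrt ξ) / (2 * (1 + K * Real.sqrt ξ) ^ 2))
        + 1 / Real.pi * ξ * (-(K * (3 / Real.sqrt ξ + K)) / (4 * (1 + K * Real.sqrt ξ) ^ 3))
        = Real.sqrt ξ * (2 * Real.sqrt ξ + K * ξ) / (1 + K * Real.sqrt ξ) ^ 3
          - K * (3 * Real.sqrt ξ + K * ξ) / (4 * Real.pi * (1 + K * Real.sqrt ξ) ^ 3) := by
      set s := Real.sqrt ξ with hs
      rw [← h2]
      field_simp
      ring
    rw [heq]
    linarith [key]
end

section
/- Let ω be a C² concave function on an interval containing [ξ - 2η, ξ + 2η] with ω'' negative and nondecreasing there. Then ω(ξ+2η) + ω(ξ-2η) - 2ω(ξ) ≤ 2ω''(ξ)η² for all 0 < 2η ≤ ξ, and consequently ∫₀^{ξ/2} [ω(ξ+2η) + ω(ξ-2η) - 2ω(ξ)]/η² dη ≤ ξ ω''(ξ). -/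
open MeasureTheory

lemma key_aux (F G H : ℝ → ℝ) (a : ℝ)
    (hF : ∀ x ∈ Set.Icc (0:ℝ) a, HasDerivAt F (G x) x)
    (hG : ∀ x ∈ Set.Icc (0:ℝ) a, HasDerivAt G (H x) x)
    (hF0 : F 0 = 0) (hG0 : G 0 = 0)
    (hH : ∀ x ∈ Set.Ioo (0:ℝ) a, H x ≤ 0) :
    ∀ x ∈ Set.Icc (0:ℝ) a, F x ≤ 0 := by
  rcases le_or_gt a 0 with h | h
  · intro x hx
    have : x = 0 := le_antisymm (hx.2.trans h) hx.1
    simp [this, hF0]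
  have hint : interior (Set.Icc (0:ℝ) a) = Set.Ioo 0 a := interior_Icc
  have hGanti : AntitoneOn G (Set.Icc 0 a) := by
    apply antitoneOn_of_deriv_nonpos (convex_Icc 0 a)
    · exact fun x hx => (hG x hx).continuousAt.continuousWithinAt
    · intro x hx; rw [hint] at hx
      exact ((hG x (Set.Ioo_subset_Icc_self hx)).differentiableAt).differentiableWithinAt
    · intro x hx; rw [hint] at hx
      rw [(hG x (Set.Ioo_subset_Icc_self hx)).deriv]; exact hH x hx
  have hGle : ∀ x ∈ Set.Icc (0:ℝ) a, G x ≤ 0 := by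
    intro x hx
    have := hGanti (Set.left_mem_Icc.2 h.le) hx hx.1
    rwa [hG0] at this
  have hFanti : AntitoneOn F (Set.Icc 0 a) := by
    apply antitoneOn_of_deriv_nonpos (convex_Icc 0 a)
    · exact fun x hx => (hF x hx).continuousAt.continuousWithinAt
    · intro x hx; rw [hint] at hx
      exact ((hF x (Set.Ioo_subset_Icc_self hx)).differentiableAt).differentiableWithinAt
    · intro x hx; rw [hint] at hx
      rw [(hF x (Set.Ioo_subset_Icc_self hx)).deriv]
      exact hGle x (Set.Ioo_subset_Icc_self hx)
  intro x hx
  have := hFanti (Set.left_mem_Icc.2 h.le) hx hx.1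
  rwa [hF0] at this

/-- If `ω` is `C²` on an interval containing `[0, 2ξ]` with `ω''` negative and
nondecreasing there, then `ω(ξ+2η) + ω(ξ-2η) - 2ω(ξ) ≤ 2ω''(ξ)η²` for `0 < 2η ≤ ξ`,
and consequently `∫₀^{ξ/2} [ω(ξ+2η)+ω(ξ-2η)-2ω(ξ)]/η² dη ≤ ξ ω''(ξ)`. -/
theorem stmt_6 (ω : ℝ → ℝ) (ξ : ℝ) (hξ : 0 < ξ)
    (hd1 : ∀ x ∈ Set.Icc (0 : ℝ) (2 * ξ), DifferentiableAt ℝ ω x)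
    (hd2 : ∀ x ∈ Set.Icc (0 : ℝ) (2 * ξ), DifferentiableAt ℝ (deriv ω) x)
    (hcont : ContinuousOn (deriv (deriv ω)) (Set.Icc 0 (2 * ξ)))
    (hneg : ∀ x ∈ Set.Icc (0 : ℝ) (2 * ξ), deriv (deriv ω) x < 0)
    (hmono : MonotoneOn (deriv (deriv ω)) (Set.Icc 0 (2 * ξ))) :
    (∀ η : ℝ, 0 < η → 2 * η ≤ ξ →
      ω (ξ + 2 * η) + ω (ξ - 2 * η) - 2 * ω ξ ≤ 2 * deriv (deriv ω) ξ * η ^ 2) ∧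
    (∫ η in Set.Ioo (0 : ℝ) (ξ / 2),
        (ω (ξ + 2 * η) + ω (ξ - 2 * η) - 2 * ω ξ) / η ^ 2) ≤ ξ * deriv (deriv ω) ξ := by
  set c := deriv (deriv ω) ξ with hc
  have hξmem : ξ ∈ Set.Icc (0:ℝ) (2*ξ) := ⟨hξ.le, by linarith⟩
  -- memberships
  have hmemp : ∀ η ∈ Set.Icc (0:ℝ) (ξ/2), ξ + 2*η ∈ Set.Icc (0:ℝ) (2*ξ) := by
    intro η hη; constructor <;> [nlinarith [hη.1]; nlinarith [hη.2]]
  have hmemm : ∀ η ∈ Set.Icc (0:ℝ) (ξ/2), ξ - 2*η ∈ Set.Icc (0:ℝ) (2*ξ) := by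
    intro η hη; constructor <;> [nlinarith [hη.2]; nlinarith [hη.1]]
  -- derivatives of the building blocks
  have haffp : ∀ η : ℝ, HasDerivAt (fun η : ℝ => ξ + 2*η) 2 η := by
    intro η
    simpa using ((hasDerivAt_id η).const_mul 2).const_add ξ
  have haffm : ∀ η : ℝ, HasDerivAt (fun η : ℝ => ξ - 2*η) (-2) η := by
    intro η
    simpa using (((hasDerivAt_id η).const_mul 2).const_sub ξ)
  -- generic F,G,H with parameter k, and the key inequality
  have main : ∀ k : ℝ,
      (∀ η ∈ Set.Ioo (0:ℝ) (ξ/2),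
        4 * deriv (deriv ω) (ξ+2*η) + 4 * deriv (deriv ω) (ξ-2*η) - 4*k ≤ 0) →
      ∀ η ∈ Set.Icc (0:ℝ) (ξ/2),
        ω (ξ + 2*η) + ω (ξ - 2*η) - 2*ω ξ - 2*k*η^2 ≤ 0 := by
    intro k hk
    apply key_aux
      (fun η => ω (ξ + 2*η) + ω (ξ - 2*η) - 2*ω ξ - 2*k*η^2)
      (fun η => 2 * deriv ω (ξ+2*η) - 2 * deriv ω (ξ-2*η) - 4*k*η)
      (fun η => 4 * deriv (deriv ω) (ξ+2*η) + 4 * deriv (deriv ω) (ξ-2*η) - 4*k)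
      (ξ/2)
    · intro η hη
      have h1 : HasDerivAt (fun η : ℝ => ω (ξ + 2*η)) (deriv ω (ξ+2*η) * 2) η :=
        ((hd1 _ (hmemp η hη)).hasDerivAt).comp η (haffp η)
      have h2 : HasDerivAt (fun η : ℝ => ω (ξ - 2*η)) (deriv ω (ξ-2*η) * (-2)) η :=
        ((hd1 _ (hmemm η hη)).hasDerivAt).comp η (haffm η)
      have h3 : HasDerivAt (fun η : ℝ => 2*k*η^2) (2*k*(2*η)) η := by
        simpa using (hasDerivAt_pow 2 η).const_mul (2*k)
      have := ((h1.add h2).sub_const (2*ω ξ)).sub h3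
      convert this using 1
      · rfl
      · rfl
      · rfl
      ring
    · intro η hη
      have h1 : HasDerivAt (fun η : ℝ => 2 * deriv ω (ξ+2*η))
          (2 * (deriv (deriv ω) (ξ+2*η) * 2)) η :=
        (((hd2 _ (hmemp η hη)).hasDerivAt).comp (h₂ := deriv ω) η (haffp η)).const_mul 2
      have h2 : HasDerivAt (fun η : ℝ => 2 * deriv ω (ξ-2*η))
          (2 * (deriv (deriv ω) (ξ-2*η) * (-2))) η :=
        (((hd2 _ (hmemm η hη)).hasDerivAt).comp (h₂ := deriv ω) η (haffm η)).const_mul 2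
      have h3 : HasDerivAt (fun η : ℝ => 4*k*η) (4*k) η := by
        simpa using (hasDerivAt_id η).const_mul (4*k)
      have := (h1.sub h2).sub h3
      convert this using 1
      · rfl
      · rfl
      · rfl
      ring
    · norm_num; ring
    · norm_num
    · exact hk
  -- upper bound: k = c
  have hupper : ∀ η ∈ Set.Icc (0:ℝ) (ξ/2),
      ω (ξ + 2*η) + ω (ξ - 2*η) - 2*ω ξ ≤ 2*c*η^2 := by
    intro η hη
    have := main c (fun η hη => by
      have hη' : η ∈ Set.Icc (0:ℝ) (ξ/2) := Set.Ioo_subset_Icc_self hη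
      have h1 : deriv (deriv ω) (ξ+2*η) < 0 := hneg _ (hmemp η hη')
      have h2 : deriv (deriv ω) (ξ-2*η) ≤ c := by
        apply hmono (hmemm η hη') hξmem
        nlinarith [hη.1]
      linarith) η hη
    linarith
  -- lower bound with the min of the second derivative
  obtain ⟨x₀, hx₀, hx₀min⟩ :=
    (isCompact_Icc : IsCompact (Set.Icc (0:ℝ) (2*ξ))).exists_isMinOn
      (Set.nonempty_Icc.2 (by linarith)) hcont
  set m := deriv (deriv ω) x₀ with hm
  have hmle : ∀ x ∈ Set.Icc (0:ℝ) (2*ξ), m ≤ deriv (deriv ω) x := fun x hx => hx₀min hx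
  have main2 : ∀ k : ℝ,
      (∀ η ∈ Set.Ioo (0:ℝ) (ξ/2),
        4*k - (4 * deriv (deriv ω) (ξ+2*η) + 4 * deriv (deriv ω) (ξ-2*η)) ≤ 0) →
      ∀ η ∈ Set.Icc (0:ℝ) (ξ/2),
        2*k*η^2 - (ω (ξ + 2*η) + ω (ξ - 2*η) - 2*ω ξ) ≤ 0 := by
    intro k hk
    apply key_aux
      (fun η => 2*k*η^2 - (ω (ξ + 2*η) + ω (ξ - 2*η) - 2*ω ξ))
      (fun η => 4*k*η - (2 * deriv ω (ξ+2*η) - 2 * deriv ω (ξ-2*η)))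
      (fun η => 4*k - (4 * deriv (deriv ω) (ξ+2*η) + 4 * deriv (deriv ω) (ξ-2*η)))
      (ξ/2)
    · intro η hη
      have h1 : HasDerivAt (fun η : ℝ => ω (ξ + 2*η)) (deriv ω (ξ+2*η) * 2) η :=
        ((hd1 _ (hmemp η hη)).hasDerivAt).comp η (haffp η)
      have h2 : HasDerivAt (fun η : ℝ => ω (ξ - 2*η)) (deriv ω (ξ-2*η) * (-2)) η :=
        ((hd1 _ (hmemm η hη)).hasDerivAt).comp η (haffm η)
      have h3 : HasDerivAt (fun η : ℝ => 2*k*η^2) (2*k*(2*η)) η := by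
        simpa using (hasDerivAt_pow 2 η).const_mul (2*k)
      have := h3.sub (((h1.add h2).sub_const (2*ω ξ)))
      convert this using 1
      · rfl
      · rfl
      · rfl
      ring
    · intro η hη
      have h1 : HasDerivAt (fun η : ℝ => 2 * deriv ω (ξ+2*η))
          (2 * (deriv (deriv ω) (ξ+2*η) * 2)) η :=
        (((hd2 _ (hmemp η hη)).hasDerivAt).comp (h₂ := deriv ω) η (haffp η)).const_mul 2
      have h2 : HasDerivAt (fun η : ℝ => 2 * deriv ω (ξ-2*η))
          (2 * (deriv (deriv ω) (ξ-2*η) * (-2))) η :=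
        (((hd2 _ (hmemm η hη)).hasDerivAt).comp (h₂ := deriv ω) η (haffm η)).const_mul 2
      have h3 : HasDerivAt (fun η : ℝ => 4*k*η) (4*k) η := by
        simpa using (hasDerivAt_id η).const_mul (4*k)
      have := h3.sub (h1.sub h2)
      convert this using 1
      · rfl
      · rfl
      · rfl
      ring
    · norm_num; ring
    · norm_num
    · exact hk
  have hlower : ∀ η ∈ Set.Icc (0:ℝ) (ξ/2),
      4*m*η^2 ≤ ω (ξ + 2*η) + ω (ξ - 2*η) - 2*ω ξ := by
    intro η hη
    have := main2 (2*m) (fun η hη => by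
      have hη' : η ∈ Set.Icc (0:ℝ) (ξ/2) := Set.Ioo_subset_Icc_self hη
      have h1 := hmle _ (hmemp η hη')
      have h2 := hmle _ (hmemm η hη')
      linarith) η hη
    linarith
  -- conclude
  have hcneg : c < 0 := hneg ξ hξmem
  have hmc : m ≤ c := hmle ξ hξmem
  constructor
  · intro η hη h2η
    have hη' : η ∈ Set.Icc (0:ℝ) (ξ/2) := ⟨hη.le, by linarith⟩
    exact hupper η hη'
  · -- integrability and integral bound
    set g : ℝ → ℝ := fun η => (ω (ξ + 2*η) + ω (ξ - 2*η) - 2*ω ξ) / η^2 with hg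
    have hgupper : ∀ η ∈ Set.Ioo (0:ℝ) (ξ/2), g η ≤ 2*c := by
      intro η hη
      have hpos : (0:ℝ) < η^2 := pow_pos hη.1 2
      rw [hg, div_le_iff₀ hpos]
      have := hupper η (Set.Ioo_subset_Icc_self hη)
      nlinarith
    have hglower : ∀ η ∈ Set.Ioo (0:ℝ) (ξ/2), 4*m ≤ g η := by
      intro η hη
      have hpos : (0:ℝ) < η^2 := pow_pos hη.1 2
      rw [hg, le_div_iff₀ hpos]
      have := hlower η (Set.Ioo_subset_Icc_self hη)
      nlinarith
    have hmeas : MeasurableSet (Set.Ioo (0:ℝ) (ξ/2)) := measurableSet_Ioo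
    have hgcont : ContinuousOn g (Set.Ioo (0:ℝ) (ξ/2)) := by
      apply ContinuousOn.div
      · apply ContinuousOn.sub
        apply ContinuousOn.add
        · intro η hη
          exact (((hd1 _ (hmemp η (Set.Ioo_subset_Icc_self hη))).hasDerivAt).comp η
            (haffp η)).continuousAt.continuousWithinAt
        · intro η hη
          exact (((hd1 _ (hmemm η (Set.Ioo_subset_Icc_self hη))).hasDerivAt).comp η
            (haffm η)).continuousAt.continuousWithinAt
        · exact continuousOn_const
      · exact (continuous_pow 2).continuousOn
      · intro η hη
        have : (0:ℝ) < η := hη.1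
        positivity
    have hInt : IntegrableOn g (Set.Ioo (0:ℝ) (ξ/2)) := by
      haveI : IsFiniteMeasure (volume.restrict (Set.Ioo (0:ℝ) (ξ/2))) := by
        constructor
        rw [Measure.restrict_apply_univ, Real.volume_Ioo]
        exact ENNReal.ofReal_lt_top
      refine ⟨hgcont.aestronglyMeasurable hmeas, ?_⟩
      apply HasFiniteIntegral.of_bounded (C := -(4*m))
      filter_upwards [ae_restrict_mem hmeas] with η hη
      have h1 := hgupper η hη
      have h2 := hglower η hη
      rw [Real.norm_eq_abs, abs_le]
      constructor <;> nlinarith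
    have hle : ∫ η in Set.Ioo (0:ℝ) (ξ/2), g η ≤ ∫ _η in Set.Ioo (0:ℝ) (ξ/2), 2*c :=
      setIntegral_mono_on hInt (integrableOn_const (by
        rw [Real.volume_Ioo]; exact ENNReal.ofReal_ne_top)) hmeas hgupper
    have hconst : ∫ _η in Set.Ioo (0:ℝ) (ξ/2), (2*c : ℝ) = ξ * c := by
      rw [setIntegral_const, Real.volume_real_Ioo_of_le (by linarith)]
      simp only [smul_eq_mul]
      ring
    calc (∫ η in Set.Ioo (0:ℝ) (ξ/2),
        (ω (ξ + 2 * η) + ω (ξ - 2 * η) - 2 * ω ξ) / η ^ 2) ≤ ∫ _η in Set.Ioo (0:ℝ) (ξ/2), 2*c := hle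
      _ = ξ * c := hconst
end

section
/- Consider the ODE system κ' = κ² - C κ^{1+2α} H^{-2α}, H' = -C κ^{2α} H^{1-2α}, with C > 0 and 0 < α < 1/2. If the initial data satisfy H(0)^{2α} κ(0)^{1-2α} ≥ C/(1-2α), then on any interval [0,T] on which the solution exists with κ bounded and H positive, the function t ↦ H(t)^{2α} κ(t)^{1-2α} is non-decreasing. -/
open Set Real

/-- Key algebraic identity for the derivative computation. -/
lemma stmt_9_key (a C h k : ℝ) (hh : 0 < h) (hk : 0 < k) (hab : a + (1 - a) = 1) :
    -(C * k ^ a * h ^ (1 - a)) * a * h ^ (a - 1) * k ^ (1 - a)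
      + h ^ a * ((k ^ 2 - C * k ^ (1 + a) * h ^ (-a)) * (1 - a) * k ^ (1 - a - 1))
      = (1 - a) * k * (h ^ a * k ^ (1 - a)) - C * k := by
  have e1 : h ^ (1 - a) * h ^ (a - 1) = 1 := by
    rw [← Real.rpow_add hh, show (1 - a) + (a - 1) = 0 by ring, Real.rpow_zero]
  have e2 : h ^ (-a) * h ^ a = 1 := by
    rw [← Real.rpow_add hh, show -a + a = 0 by ring, Real.rpow_zero]
  have e3 : k ^ a * k ^ (1 - a) = k := by
    rw [← Real.rpow_add hk, show a + (1 - a) = 1 by ring, Real.rpow_one]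
  have e4 : k ^ (1 + a) * k ^ (1 - a - 1) = k := by
    rw [← Real.rpow_add hk, show (1 + a) + (1 - a - 1) = 1 by ring, Real.rpow_one]
  have e5 : k ^ (1 - a - 1) * k = k ^ (1 - a) := by
    nth_rewrite 2 [← Real.rpow_one k]
    rw [← Real.rpow_add hk, show (1 - a - 1) + 1 = 1 - a by ring]
  linear_combination (-(a * C) * (k ^ a * k ^ (1 - a))) * e1 + (-(a * C)) * e3 +
    ((1 - a) * (h ^ a) * k) * e5 +
    (-((1 - a) * C) * (k ^ (1 + a) * k ^ (1 - a - 1))) * e2 + (-((1 - a) * C)) * e4 +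
    (C * k) * hab

/-- Monotonicity of `H^{2α} κ^{1-2α}` along the ODE system
`κ' = κ² - C κ^{1+2α} H^{-2α}`, `H' = -C κ^{2α} H^{1-2α}`, provided that initially
`H(0)^{2α} κ(0)^{1-2α} ≥ C/(1-2α)`. -/
theorem stmt_9 (α C T : ℝ) (hα0 : 0 < α) (hα : α < 1 / 2) (hC : 0 < C) (hT : 0 < T)
    (κ H : ℝ → ℝ)
    (hκpos : ∀ t ∈ Set.Icc (0 : ℝ) T, 0 < κ t)
    (hHpos : ∀ t ∈ Set.Icc (0 : ℝ) T, 0 < H t)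
    (hκode : ∀ t ∈ Set.Icc (0 : ℝ) T,
      HasDerivAt κ (κ t ^ 2 - C * κ t ^ (1 + 2 * α) * H t ^ (-(2 * α))) t)
    (hHode : ∀ t ∈ Set.Icc (0 : ℝ) T,
      HasDerivAt H (-(C * κ t ^ (2 * α) * H t ^ (1 - 2 * α))) t)
    (hinit : C / (1 - 2 * α) ≤ H 0 ^ (2 * α) * κ 0 ^ (1 - 2 * α)) :
    MonotoneOn (fun t => H t ^ (2 * α) * κ t ^ (1 - 2 * α)) (Set.Icc 0 T) := by
  have hb : (0:ℝ) < 1 - 2 * α := by linarith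
  set F : ℝ → ℝ := fun t => H t ^ (2 * α) * κ t ^ (1 - 2 * α) with hFdef
  -- derivative of F
  have hF' : ∀ t ∈ Set.Icc (0:ℝ) T,
      HasDerivAt F ((1 - 2 * α) * κ t * (F t - C / (1 - 2 * α))) t := by
    intro t ht
    have hk := hκpos t ht
    have hh := hHpos t ht
    have d1 : HasDerivAt (fun t => H t ^ (2 * α))
        (-(C * κ t ^ (2 * α) * H t ^ (1 - 2 * α)) * (2 * α) * H t ^ (2 * α - 1)) t :=
      (hHode t ht).rpow_const (Or.inl hh.ne')
    have d2 : HasDerivAt (fun t => κ t ^ (1 - 2 * α))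
        ((κ t ^ 2 - C * κ t ^ (1 + 2 * α) * H t ^ (-(2 * α))) * (1 - 2 * α) *
          κ t ^ (1 - 2 * α - 1)) t :=
      (hκode t ht).rpow_const (Or.inl hk.ne')
    have hmul := d1.mul d2
    refine hmul.congr_deriv ?_
    have key := stmt_9_key (2 * α) C (H t) (κ t) hh hk (by ring)
    have hF : F t = H t ^ (2 * α) * κ t ^ (1 - 2 * α) := rfl
    rw [hF]
    have hexp : (1 - 2 * α) * κ t * (H t ^ (2 * α) * κ t ^ (1 - 2 * α) - C / (1 - 2 * α)) =
        (1 - 2 * α) * κ t * (H t ^ (2 * α) * κ t ^ (1 - 2 * α)) - C * κ t := by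
      field_simp
    rw [hexp, ← key]
  -- continuity facts
  have hFcont : ContinuousOn F (Set.Icc 0 T) := fun t ht =>
    (hF' t ht).continuousAt.continuousWithinAt
  have hκcont : ContinuousOn κ (Set.Icc 0 T) := fun t ht =>
    (hκode t ht).continuousAt.continuousWithinAt
  -- bound on (1-2α)κ
  obtain ⟨K, hK⟩ := (isCompact_Icc (a := (0:ℝ)) (b := T)).exists_bound_of_continuousOn
    ((continuousOn_const (c := 1 - 2*α)).mul hκcont)
  -- G := F - C/b is nonnegative on [0,T]
  set G : ℝ → ℝ := fun t => F t - C / (1 - 2 * α) with hGdef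
  have hG' : ∀ t ∈ Set.Icc (0:ℝ) T, HasDerivAt G ((1 - 2 * α) * κ t * G t) t :=
    fun t ht => (hF' t ht).sub_const _
  have hG0 : 0 ≤ G 0 := sub_nonneg.mpr hinit
  have hGnonneg : ∀ t ∈ Set.Icc (0:ℝ) T, 0 ≤ G t := by
    by_contra hcon
    push_neg at hcon
    obtain ⟨t₀, ht₀, hneg⟩ := hcon
    set S : Set ℝ := {t | t ∈ Set.Icc (0:ℝ) t₀ ∧ 0 ≤ G t} with hSdef
    have h0S : (0:ℝ) ∈ S := ⟨⟨le_refl 0, ht₀.1⟩, hG0⟩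
    have hSne : S.Nonempty := ⟨0, h0S⟩
    have hSbdd : BddAbove S := ⟨t₀, fun x hx => hx.1.2⟩
    set s := sSup S with hsdef
    have hs_mem_cl : s ∈ closure S := csSup_mem_closure hSne hSbdd
    have hs0 : 0 ≤ s := le_csSup hSbdd h0S
    have hst₀ : s ≤ t₀ := csSup_le hSne fun x hx => hx.1.2
    have hsIcc : s ∈ Set.Icc (0:ℝ) T := ⟨hs0, hst₀.trans ht₀.2⟩
    -- G s ≥ 0
    have hGs_nonneg : 0 ≤ G s := by
      have hc : ContinuousWithinAt G S s := (hG' s hsIcc).continuousAt.continuousWithinAt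
      have hne : (nhdsWithin s S).NeBot := mem_closure_iff_nhdsWithin_neBot.mp hs_mem_cl
      exact ge_of_tendsto hc (Filter.eventually_of_mem self_mem_nhdsWithin fun x hx => hx.2)
    -- G < 0 strictly to the right of s in [0, t₀]
    have hright : ∀ x, s < x → x ≤ t₀ → G x < 0 := by
      intro x hsx hxt
      by_contra hge
      push_neg at hge
      have : x ∈ S := ⟨⟨hs0.trans hsx.le, hxt⟩, hge⟩
      exact absurd (le_csSup hSbdd this) (not_le.mpr hsx)
    have hslt : s < t₀ := lt_of_le_of_ne hst₀ (by
      intro h; rw [h] at hGs_nonneg; linarith)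
    -- G s = 0
    have hGs_le : G s ≤ 0 := by
      have hc : ContinuousWithinAt G (Set.Ioi s) s :=
        (hG' s hsIcc).continuousAt.continuousWithinAt
      have hne : (nhdsWithin s (Set.Ioi s)).NeBot := nhdsGT_neBot s
      refine le_of_tendsto hc ?_
      filter_upwards [Ioo_mem_nhdsGT_of_mem (Set.left_mem_Ico.mpr hslt)] with x hx
      exact (hright x hx.1 hx.2.le).le
    have hGs : G s = 0 := le_antisymm hGs_le hGs_nonneg
    -- Grönwall on [s, t₀]
    have hsub : Set.Icc s t₀ ⊆ Set.Icc (0:ℝ) T := fun x hx =>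
      ⟨hs0.trans hx.1, hx.2.trans ht₀.2⟩
    have hbound := norm_le_gronwallBound_of_norm_deriv_right_le
      (f := G) (f' := fun t => (1 - 2 * α) * κ t * G t) (δ := 0) (K := K) (ε := 0)
      (a := s) (b := t₀)
      (fun x hx => (hG' x (hsub hx)).continuousAt.continuousWithinAt)
      (fun x hx => ((hG' x (hsub ⟨hx.1, hx.2.le⟩))).hasDerivWithinAt)
      (by simp [hGs])
      (fun x hx => by
        have hKx := hK x (hsub ⟨hx.1, hx.2.le⟩)
        have : ‖(1 - 2 * α) * κ x * G x‖ = ‖(1 - 2 * α) * κ x‖ * ‖G x‖ := norm_mul _ _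
        rw [this, add_zero]
        exact mul_le_mul_of_nonneg_right hKx (norm_nonneg _))
    have h0 := hbound t₀ ⟨hslt.le, le_refl t₀⟩
    rw [gronwallBound_ε0_δ0] at h0
    have : G t₀ = 0 := norm_le_zero_iff.mp h0
    linarith
  -- conclude monotonicity
  have := monotoneOn_of_deriv_nonneg (convex_Icc (0:ℝ) T) hFcont
    (fun x hx => by
      rw [interior_Icc] at hx
      exact ((hF' x ⟨hx.1.le, hx.2.le⟩).differentiableAt.differentiableWithinAt))
    (fun x hx => by
      rw [interior_Icc] at hx
      have hxI : x ∈ Set.Icc (0:ℝ) T := ⟨hx.1.le, hx.2.le⟩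
      rw [(hF' x hxI).deriv]
      have := hGnonneg x hxI
      have hk := hκpos x hxI
      positivity)
  exact this
end

section
/- Consider the ODE system κ' = κ² - C κ^{1+2α} H^{-2α}, H' = -C κ^{2α} H^{1-2α} with 0 < α < 1/2, C > 0. Assume H^{2α}κ^{1-2α} ≥ 3C/(1-2α) holds initially (hence, by the monotonicity lemma, at all later times). Then κ'(t) ≥ (2/3)κ(t)² for all t in the interval of existence, and consequently κ(t) ≥ 1/(κ(0)^{-1} - (2/3)t); in particular κ blows up no later than time 3/(2κ(0)). -/
/-- For the ODE system `κ' = κ² - C κ^{1+2α} H^{-2α}`, `H' = -C κ^{2α} H^{1-2α}` with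
`H^{2α}κ^{1-2α} ≥ 3C/(1-2α)` initially, one has `κ' ≥ (2/3)κ²`, hence
`κ(t) ≥ 1/(κ(0)⁻¹ - (2/3)t)`. -/
theorem stmt_10 (α C T : ℝ) (hα0 : 0 < α) (hα : α < 1 / 2) (hC : 0 < C) (hT : 0 < T)
    (κ H : ℝ → ℝ)
    (hκpos : ∀ t ∈ Set.Icc (0 : ℝ) T, 0 < κ t)
    (hHpos : ∀ t ∈ Set.Icc (0 : ℝ) T, 0 < H t)
    (hκode : ∀ t ∈ Set.Icc (0 : ℝ) T,
      HasDerivAt κ (κ t ^ 2 - C * κ t ^ (1 + 2 * α) * H t ^ (-(2 * α))) t)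
    (hHode : ∀ t ∈ Set.Icc (0 : ℝ) T,
      HasDerivAt H (-(C * κ t ^ (2 * α) * H t ^ (1 - 2 * α))) t)
    (hinit : 3 * C / (1 - 2 * α) ≤ H 0 ^ (2 * α) * κ 0 ^ (1 - 2 * α)) :
    (∀ t ∈ Set.Icc (0 : ℝ) T,
      (2 / 3) * κ t ^ 2 ≤ κ t ^ 2 - C * κ t ^ (1 + 2 * α) * H t ^ (-(2 * α))) ∧
    (∀ t ∈ Set.Icc (0 : ℝ) T, 1 / ((κ 0)⁻¹ - (2 / 3) * t) ≤ κ t) := by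
  have h2α : (0:ℝ) < 1 - 2*α := by linarith
  set Q : ℝ → ℝ := fun t => H t ^ (2*α) * κ t ^ (1-2*α) with hQdef
  -- derivative of Q
  have key : ∀ t ∈ Set.Icc (0:ℝ) T, HasDerivAt Q (κ t * ((1-2*α) * Q t - C)) t := by
    intro t ht
    have hx := hκpos t ht
    have hy := hHpos t ht
    have d1 := (hHode t ht).rpow_const (p := 2*α) (Or.inl hy.ne')
    have d2 := (hκode t ht).rpow_const (p := 1-2*α) (Or.inl hx.ne')
    have hmul := d1.mul d2
    convert hmul using 1
    show κ t * ((1-2*α) * (H t ^ (2*α) * κ t ^ (1-2*α)) - C) = _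
    set x := κ t with hxdef
    set y := H t with hydef
    have hxa : x ^ (2*α) ≠ 0 := (Real.rpow_pos_of_pos hx _).ne'
    have hyb : y ^ (2*α) ≠ 0 := (Real.rpow_pos_of_pos hy _).ne'
    have e1 : x ^ (1-2*α) = x / x^(2*α) := by
      rw [eq_div_iff hxa, ← Real.rpow_add hx, show (1-2*α)+2*α = 1 by ring, Real.rpow_one]
    have e2 : y ^ (1-2*α) = y / y^(2*α) := by
      rw [eq_div_iff hyb, ← Real.rpow_add hy, show (1-2*α)+2*α = 1 by ring, Real.rpow_one]
    have e3 : y ^ (2*α-1) = y ^ (2*α) / y := by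
      rw [eq_div_iff hy.ne']
      nth_rewrite 2 [← Real.rpow_one y]
      rw [← Real.rpow_add hy, show 2*α-1+1 = 2*α by ring]
    have e5 : y ^ (-(2*α)) = (y^(2*α))⁻¹ := Real.rpow_neg hy.le _
    have e6 : x ^ (1+2*α) = x * x^(2*α) := by
      rw [Real.rpow_add hx, Real.rpow_one]
    have e7 : x ^ (1-2*α-1) = (x^(2*α))⁻¹ := by
      rw [show 1-2*α-1 = -(2*α) by ring, Real.rpow_neg hx.le]
    rw [e1, e2, e3, e5, e6, e7]
    field_simp
    ring
    all_goals rfl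
  have hQcont : ContinuousOn Q (Set.Icc 0 T) := fun t ht =>
    (key t ht).continuousAt.continuousWithinAt
  have hQ0 : 3 * C / (1 - 2*α) ≤ Q 0 := hinit
  have hB'B : 2*C/(1-2*α) < 3*C/(1-2*α) := by
    rw [div_lt_div_iff₀ h2α h2α]; nlinarith
  -- monotonicity from the lower bound on Q
  have mono_aux : ∀ b ∈ Set.Icc (0:ℝ) T,
      (∀ s ∈ Set.Ico (0:ℝ) b, 2*C/(1-2*α) < Q s) → MonotoneOn Q (Set.Icc 0 b) := by
    intro b hb hlow
    have hsub : Set.Icc (0:ℝ) b ⊆ Set.Icc 0 T := Set.Icc_subset_Icc le_rfl hb.2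
    apply monotoneOn_of_deriv_nonneg (convex_Icc _ _) (hQcont.mono hsub)
    · intro s hs
      rw [interior_Icc] at hs
      exact ((key s (hsub (Set.Ioo_subset_Icc_self hs))).differentiableAt).differentiableWithinAt
    · intro s hs
      rw [interior_Icc] at hs
      have hsIcc := hsub (Set.Ioo_subset_Icc_self hs)
      rw [(key s hsIcc).deriv]
      have h1 : 2*C/(1-2*α) < Q s := hlow s ⟨hs.1.le, hs.2⟩
      rw [div_lt_iff₀ h2α] at h1
      have hx := hκpos s hsIcc
      nlinarith
  -- the lower bound 2C/(1-2α) < Q holds on all of [0,T]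
  have hgt : ∀ t ∈ Set.Icc (0:ℝ) T, 2*C/(1-2*α) < Q t := by
    by_contra hcon
    push_neg at hcon
    obtain ⟨t₁, ht₁, hQt₁⟩ := hcon
    set A : Set ℝ := Set.Icc 0 T ∩ Q ⁻¹' Set.Iic (2*C/(1-2*α)) with hAdef
    have hAclosed : IsClosed A :=
      hQcont.preimage_isClosed_of_isClosed isClosed_Icc isClosed_Iic
    have hAne : A.Nonempty := ⟨t₁, ht₁, hQt₁⟩
    have hAbdd : BddBelow A := ⟨0, fun a ha => ha.1.1⟩
    have ht₀A : sInf A ∈ A := hAclosed.csInf_mem hAne hAbdd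
    set t₀ := sInf A with ht₀def
    have ht₀Icc : t₀ ∈ Set.Icc (0:ℝ) T := ht₀A.1
    have hQt₀ : Q t₀ ≤ 2*C/(1-2*α) := ht₀A.2
    have hbefore : ∀ s ∈ Set.Ico (0:ℝ) t₀, 2*C/(1-2*α) < Q s := by
      intro s hs
      by_contra hle
      push_neg at hle
      have hsA : s ∈ A := ⟨⟨hs.1, hs.2.le.trans ht₀Icc.2⟩, hle⟩
      exact absurd (csInf_le hAbdd hsA) (not_le.mpr hs.2)
    have hmono := mono_aux t₀ ht₀Icc hbefore
    have hQle : Q 0 ≤ Q t₀ := hmono ⟨le_rfl, ht₀Icc.1⟩ ⟨ht₀Icc.1, le_rfl⟩ ht₀Icc.1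
    linarith
  -- hence Q is monotone on [0,T], and Q t ≥ 3C/(1-2α) everywhere
  have hQB : ∀ t ∈ Set.Icc (0:ℝ) T, 3*C/(1-2*α) ≤ Q t := by
    have hmono := mono_aux T ⟨le_of_lt hT, le_rfl⟩
      (fun s hs => hgt s ⟨hs.1, hs.2.le⟩)
    intro t ht
    exact hQ0.trans (hmono ⟨le_rfl, hT.le⟩ ht ht.1)
  -- part 1
  have part1 : ∀ t ∈ Set.Icc (0:ℝ) T,
      (2/3) * κ t ^ 2 ≤ κ t ^ 2 - C * κ t ^ (1 + 2*α) * H t ^ (-(2*α)) := by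
    intro t ht
    have hx := hκpos t ht
    have hy := hHpos t ht
    have hQt := hQB t ht
    have hQ3 : 3*C ≤ Q t := by
      refine le_trans ?_ hQt
      rw [le_div_iff₀ h2α]; nlinarith
    have hPpos : 0 < κ t ^ (1+2*α) * H t ^ (-(2*α)) :=
      mul_pos (Real.rpow_pos_of_pos hx _) (Real.rpow_pos_of_pos hy _)
    have hid : Q t * (κ t ^ (1+2*α) * H t ^ (-(2*α))) = κ t ^ 2 := by
      simp only [hQdef]
      have hyb : H t ^ (2*α) ≠ 0 := (Real.rpow_pos_of_pos hy _).ne'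
      have h12 : κ t ^ (1-2*α) * κ t ^ (1+2*α) = κ t ^ 2 := by
        rw [← Real.rpow_add hx, show (1-2*α)+(1+2*α) = 2 by ring,
          show (2:ℝ) = ((2:ℕ):ℝ) by norm_num, Real.rpow_natCast]
      rw [Real.rpow_neg hy.le]
      field_simp
      linear_combination h12
    have hmul : 3*C * (κ t ^ (1+2*α) * H t ^ (-(2*α))) ≤ κ t ^ 2 := by
      rw [← hid]
      exact mul_le_mul_of_nonneg_right hQ3 hPpos.le
    nlinarith
  refine ⟨part1, ?_⟩
  -- part 2: comparison for κ
  set g : ℝ → ℝ := fun t => (κ t)⁻¹ + (2/3)*t with hgdef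
  have hgd : ∀ t ∈ Set.Icc (0:ℝ) T,
      HasDerivAt g (-(κ t ^ 2 - C * κ t ^ (1 + 2*α) * H t ^ (-(2*α))) / κ t ^ 2 + (2/3)*1) t := by
    intro t ht
    exact ((hκode t ht).inv (hκpos t ht).ne').add ((hasDerivAt_id t).const_mul (2/3))
  have hganti : AntitoneOn g (Set.Icc 0 T) := by
    apply antitoneOn_of_deriv_nonpos (convex_Icc _ _)
      (fun t ht => (hgd t ht).continuousAt.continuousWithinAt)
    · intro s hs
      rw [interior_Icc] at hs
      exact ((hgd s (Set.Ioo_subset_Icc_self hs)).differentiableAt).differentiableWithinAt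
    · intro s hs
      rw [interior_Icc] at hs
      have hsIcc := Set.Ioo_subset_Icc_self hs
      rw [(hgd s hsIcc).deriv]
      have hx := hκpos s hsIcc
      have hx2 : 0 < κ s ^ 2 := pow_pos hx 2
      have h1 := part1 s hsIcc
      have h2 : (2:ℝ)/3 ≤ (κ s ^ 2 - C * κ s ^ (1 + 2*α) * H s ^ (-(2*α))) / κ s ^ 2 :=
        (le_div_iff₀ hx2).mpr (by linarith)
      have h3 : -(κ s ^ 2 - C * κ s ^ (1 + 2*α) * H s ^ (-(2*α))) / κ s ^ 2 ≤ -(2/3) := by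
        rw [neg_div]; linarith
      linarith
  intro t ht
  have hmem0 : (0:ℝ) ∈ Set.Icc (0:ℝ) T := ⟨le_rfl, hT.le⟩
  have hgle : g t ≤ g 0 := hganti hmem0 ht ht.1
  simp only [hgdef, mul_zero, add_zero] at hgle
  have hinvle : (κ t)⁻¹ ≤ (κ 0)⁻¹ - (2/3)*t := by linarith
  have hx := hκpos t ht
  rcases le_or_gt ((κ 0)⁻¹ - (2/3)*t) 0 with hD | hD
  · have : 1/((κ 0)⁻¹ - (2/3)*t) ≤ 0 := div_nonpos_of_nonneg_of_nonpos zero_le_one hD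
    linarith
  · have hκinv : 0 < (κ t)⁻¹ := inv_pos.mpr hx
    have h := one_div_le_one_div_of_le hκinv hinvle
    simp only [one_div, inv_inv] at h ⊢
    exact h
end

section
/- Let Φ(x) = (1/(2π)) ∫_ℝ exp(ixξ - |ξ|^{2α}) dξ for 0 < α < 1/2, and Φ_t(x) = t^{-1/(2α)} Φ(t^{-1/(2α)} x). Suppose Φ satisfies 0 < Φ(x) ≤ K/(1+|x|^{1+2α}) and |Φ'(x)| ≤ K/(1+|x|^{2+2α}). Then for every f ∈ C¹(ℝ) bounded with bounded derivative, ‖(e^{-(-Δ)^α t} - 1)f‖_{C⁰} = sup_x |∫_ℝ Φ_t(y)(f(x-y) - f(x)) dy| ≤ C(α, K) t ‖f‖_{C¹}, where ‖f‖_{C¹} = ‖f‖_∞ + ‖f'‖_∞. -/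
open MeasureTheory

/-- Profile function dominating the rescaled kernel. -/
noncomputable def Hprof (α : ℝ) (r : ℝ) : ℝ :=
  if r ≤ 1 then r ^ (-(2 * α)) else 2 * r ^ (-(1 + 2 * α))

lemma Hprof_nonneg (α : ℝ) {r : ℝ} (hr : 0 ≤ r) : 0 ≤ Hprof α r := by
  unfold Hprof
  split
  · exact Real.rpow_nonneg hr _
  · exact mul_nonneg (by norm_num) (Real.rpow_nonneg hr _)

lemma Hprof_integrableOn {α : ℝ} (hα0 : 0 < α) (hα : α < 1 / 2) :
    IntegrableOn (Hprof α) (Set.Ioi 0) := by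
  have h01 : Set.Ioi (0:ℝ) = Set.Ioc 0 1 ∪ Set.Ioi 1 := by
    rw [Set.Ioc_union_Ioi_eq_Ioi (by norm_num)]
  rw [h01]
  apply MeasureTheory.IntegrableOn.union
  · have h1 : IntegrableOn (fun r : ℝ => r ^ (-(2 * α))) (Set.Ioc 0 1) := by
      have := intervalIntegral.intervalIntegrable_rpow' (r := -(2 * α)) (a := 0) (b := 1)
        (by linarith)
      rwa [intervalIntegrable_iff_integrableOn_Ioc_of_le (by norm_num)] at this
    refine h1.congr_fun (fun r hr => ?_) measurableSet_Ioc
    simp [Hprof, hr.2]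
  · have h2 : IntegrableOn (fun r : ℝ => r ^ (-(1 + 2 * α))) (Set.Ioi 1) :=
      integrableOn_Ioi_rpow_of_lt (by linarith) one_pos
    have h3 : IntegrableOn (fun r : ℝ => 2 * r ^ (-(1 + 2 * α))) (Set.Ioi 1) :=
      h2.const_mul 2
    refine h3.congr_fun (fun r hr => ?_) measurableSet_Ioi
    simp [Hprof, not_le.mpr (Set.mem_Ioi.mp hr)]

lemma integrable_comp_abs {f : ℝ → ℝ} (hf : IntegrableOn f (Set.Ioi 0)) :
    Integrable fun x : ℝ => f |x| := by
  have hIoi : IntegrableOn (fun x : ℝ => f |x|) (Set.Ioi 0) := by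
    refine hf.congr_fun (fun x hx => ?_) measurableSet_Ioi
    rw [abs_of_pos (Set.mem_Ioi.mp hx)]
  have hIic : IntegrableOn (fun x : ℝ => f |x|) (Set.Iic 0) := by
    rw [← Measure.map_neg_eq_self (volume : Measure ℝ)]
    have m : MeasurableEmbedding fun x : ℝ => -x := (Homeomorph.neg ℝ).measurableEmbedding
    rw [m.integrableOn_map_iff]
    simp_rw [Function.comp_def, abs_neg, Set.neg_preimage, Set.neg_Iic, neg_zero]
    exact Iff.mpr integrableOn_Ici_iff_integrableOn_Ioi hIoi
  have h := hIic.union hIoi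
  rwa [Set.Iic_union_Ioi, integrableOn_univ] at h

/-- For the fractional heat kernel `Φ` (with `0 < α < 1/2`) satisfying the standard
pointwise bounds, the semigroup difference satisfies
`‖(e^{-(-Δ)^α t} - 1)f‖_{C⁰} ≤ C(α,K) t ‖f‖_{C¹}`. -/
theorem stmt_12 (α K : ℝ) (hα0 : 0 < α) (hα : α < 1 / 2) (hK : 0 < K) :
    ∃ C > 0, ∀ Φ : ℝ → ℝ, Continuous Φ →
      (∀ x : ℝ, (Φ x : ℂ) = (1 / (2 * (Real.pi : ℂ))) *
        ∫ ξ : ℝ, Complex.exp (Complex.I * (x : ℂ) * (ξ : ℂ) - ((|ξ| ^ (2 * α) : ℝ) : ℂ))) →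
      (∀ x : ℝ, 0 < Φ x) →
      (∀ x : ℝ, Φ x ≤ K / (1 + |x| ^ (1 + 2 * α))) →
      (∀ x : ℝ, |deriv Φ x| ≤ K / (1 + |x| ^ (2 + 2 * α))) →
      ∀ t : ℝ, 0 < t → ∀ f : ℝ → ℝ, ∀ M₀ M₁ : ℝ, ContDiff ℝ 1 f →
        (∀ x : ℝ, |f x| ≤ M₀) → (∀ x : ℝ, |deriv f x| ≤ M₁) →
        ∀ x : ℝ,
          |∫ y : ℝ, t ^ (-(1 / (2 * α))) * Φ (t ^ (-(1 / (2 * α))) * y) * (f (x - y) - f x)|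
            ≤ C * t * (M₀ + M₁) := by
  set I : ℝ := ∫ r in Set.Ioi (0:ℝ), Hprof α r with hI
  have hInn : 0 ≤ I := setIntegral_nonneg measurableSet_Ioi fun r hr => Hprof_nonneg α (le_of_lt hr)
  refine ⟨2 * K * I + 1, by positivity, ?_⟩
  intro Φ hΦc hΦrep hΦpos hΦbd hΦ'bd t ht f M₀ M₁ hf hM₀ hM₁ x
  set s : ℝ := t ^ (-(1 / (2 * α))) with hs_def
  have hs : 0 < s := Real.rpow_pos_of_pos ht _
  have hM₀0 : 0 ≤ M₀ := le_trans (abs_nonneg _) (hM₀ 0)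
  have hM₁0 : 0 ≤ M₁ := le_trans (abs_nonneg _) (hM₁ 0)
  -- s ^ (-(2α)) = t
  have hexp : (-(1 / (2 * α))) * (-(2 * α)) = 1 := by field_simp
  have hst : s ^ (-(2 * α)) = t := by
    rw [hs_def, ← Real.rpow_mul ht.le, hexp, Real.rpow_one]
  have hmul : s * s ^ (-(1 + 2 * α)) = t := by
    rw [← hst]
    nth_rewrite 1 [← Real.rpow_one s]
    rw [← Real.rpow_add hs]
    congr 1; ring
  -- Lipschitz bound for f
  have hlip : LipschitzWith M₁.toNNReal f := by
    apply lipschitzWith_of_nnnorm_deriv_le (hf.differentiable one_ne_zero)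
    intro z
    rw [← NNReal.coe_le_coe, coe_nnnorm, Real.coe_toNNReal M₁ hM₁0, Real.norm_eq_abs]
    exact hM₁ z
  -- pointwise bound
  have hbd : ∀ y : ℝ,
      |s * Φ (s * y) * (f (x - y) - f x)| ≤ K * t * (M₀ + M₁) * Hprof α |y| := by
    intro y
    rcases eq_or_ne y 0 with rfl | hy
    · simp only [mul_zero, sub_zero, sub_self, abs_zero]
      exact mul_nonneg (by positivity) (Hprof_nonneg _ le_rfl)
    · have hyabs : 0 < |y| := abs_pos.mpr hy
      have hsy : 0 < |s * y| := abs_pos.mpr (mul_ne_zero hs.ne' hy)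
      have hker : s * Φ (s * y) ≤ K * t * |y| ^ (-(1 + 2 * α)) := by
        have h1 : Φ (s * y) ≤ K * (s ^ (-(1 + 2 * α)) * |y| ^ (-(1 + 2 * α))) := by
          calc Φ (s * y) ≤ K / (1 + |s * y| ^ (1 + 2 * α)) := hΦbd _
            _ ≤ K / |s * y| ^ (1 + 2 * α) := by
                apply div_le_div_of_nonneg_left hK.le (Real.rpow_pos_of_pos hsy _)
                linarith [Real.rpow_nonneg (abs_nonneg (s * y)) (1 + 2 * α)]
            _ = K * (s ^ (-(1 + 2 * α)) * |y| ^ (-(1 + 2 * α))) := by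
                rw [abs_mul, abs_of_pos hs, Real.mul_rpow hs.le (abs_nonneg y),
                  Real.rpow_neg hs.le, Real.rpow_neg (abs_nonneg y)]
                ring
        calc s * Φ (s * y) ≤ s * (K * (s ^ (-(1 + 2 * α)) * |y| ^ (-(1 + 2 * α)))) :=
              mul_le_mul_of_nonneg_left h1 hs.le
          _ = K * (s * s ^ (-(1 + 2 * α))) * |y| ^ (-(1 + 2 * α)) := by ring
          _ = K * t * |y| ^ (-(1 + 2 * α)) := by rw [hmul]
      have habs : |s * Φ (s * y) * (f (x - y) - f x)|
          = s * Φ (s * y) * |f (x - y) - f x| := by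
        rw [abs_mul, abs_mul, abs_of_pos hs, abs_of_pos (hΦpos _)]
      rw [habs]
      rcases le_or_gt |y| 1 with hy1 | hy1
      · have hH : Hprof α |y| = |y| ^ (-(2 * α)) := by simp [Hprof, hy1]
        have hd : |f (x - y) - f x| ≤ M₁ * |y| := by
          have h := hlip.dist_le_mul (x - y) x
          rw [Real.dist_eq, Real.dist_eq] at h
          have he : x - y - x = -y := by ring
          rw [he, abs_neg, Real.coe_toNNReal M₁ hM₁0] at h
          exact h
        have hyy : |y| ^ (-(1 + 2 * α)) * |y| = |y| ^ (-(2 * α)) := by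
          nth_rewrite 2 [← Real.rpow_one |y|]
          rw [← Real.rpow_add hyabs]
          congr 1; ring
        have h0 : (0:ℝ) ≤ |y| ^ (-(2 * α)) := Real.rpow_nonneg (abs_nonneg y) _
        calc s * Φ (s * y) * |f (x - y) - f x|
            ≤ K * t * |y| ^ (-(1 + 2 * α)) * (M₁ * |y|) :=
              mul_le_mul hker hd (abs_nonneg _) (by positivity)
          _ = K * t * M₁ * (|y| ^ (-(1 + 2 * α)) * |y|) := by ring
          _ = K * t * M₁ * |y| ^ (-(2 * α)) := by rw [hyy]
          _ ≤ K * t * (M₀ + M₁) * Hprof α |y| := by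
              rw [hH]
              have hh : 0 ≤ K * t * M₀ * |y| ^ (-(2 * α)) := by positivity
              nlinarith [hh]
      · have hH : Hprof α |y| = 2 * |y| ^ (-(1 + 2 * α)) := by
          simp [Hprof, not_le.mpr hy1]
        have hd : |f (x - y) - f x| ≤ 2 * M₀ := by
          calc |f (x - y) - f x| ≤ |f (x - y)| + |f x| := abs_sub _ _
            _ ≤ 2 * M₀ := by linarith [hM₀ (x - y), hM₀ x]
        have h0 : (0:ℝ) ≤ |y| ^ (-(1 + 2 * α)) := Real.rpow_nonneg (abs_nonneg y) _
        calc s * Φ (s * y) * |f (x - y) - f x|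
            ≤ K * t * |y| ^ (-(1 + 2 * α)) * (2 * M₀) :=
              mul_le_mul hker hd (abs_nonneg _) (by positivity)
          _ ≤ K * t * (M₀ + M₁) * Hprof α |y| := by
              rw [hH]
              have hh : 0 ≤ K * t * M₁ * |y| ^ (-(1 + 2 * α)) := by positivity
              nlinarith [hh]
  -- integrable dominating function
  have hBint : Integrable (fun y : ℝ => K * t * (M₀ + M₁) * Hprof α |y|) :=
    (integrable_comp_abs (Hprof_integrableOn hα0 hα)).const_mul _
  have key : |∫ y : ℝ, s * Φ (s * y) * (f (x - y) - f x)|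
      ≤ ∫ y : ℝ, K * t * (M₀ + M₁) * Hprof α |y| := by
    have h := MeasureTheory.norm_integral_le_of_norm_le
      (f := fun y : ℝ => s * Φ (s * y) * (f (x - y) - f x)) hBint
      (Filter.Eventually.of_forall (fun y => by
        rw [Real.norm_eq_abs]; exact hbd y))
    simpa [Real.norm_eq_abs] using h
  have hval : (∫ y : ℝ, K * t * (M₀ + M₁) * Hprof α |y|)
      = K * t * (M₀ + M₁) * (2 * I) := by
    rw [MeasureTheory.integral_const_mul, integral_comp_abs]
  rw [hval] at key
  refine key.trans ?_
  have h1 : 0 ≤ t * (M₀ + M₁) := mul_nonneg ht.le (by linarith)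
  nlinarith [h1]
end
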